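/- Let T = (T_1,…,T_n) be a pure commuting row contraction on H with defect operator D and defect space 𝒟 = \overline{ran} D. Define Π* : H → H_n²(𝒟) by (Π*h)(z) = D(I - ∑ z_i T_i*)^{-1} h = ∑_{k∈ℕ^n} γ_k (D T^{*k} h) z^k. Then Π* is an isometry; i.e., ‖Π* h‖²_{H_n²(𝒟)} = ∑_{k∈ℕ^n} γ_k ‖D T^{*k} h‖² = ‖h‖² for all h ∈ H. -/

import Mathlib

open ContinuousLinearMap Finset

section AuxForStmt17

/-- list product lemma for pairwise commuting elements -/
lemma stmt17_W_add_single {M : Type*} [Monoid M] : ∀ {n : ℕ} (A : Fin n → M),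
    (∀ i j, Commute (A i) (A j)) → ∀ (k : Fin n → ℕ) (i : Fin n),
    (List.ofFn fun j => A j ^ (k j + (Pi.single i 1 : Fin n → ℕ) j)).prod
      = (List.ofFn fun j => A j ^ k j).prod * A i := by
  intro n
  induction n with
  | zero => intro A hA k i; exact i.elim0
  | succ n ih =>
    intro A hA k i
    rw [List.ofFn_succ, List.ofFn_succ, List.prod_cons, List.prod_cons]
    rcases Fin.eq_zero_or_eq_succ i with rfl | ⟨j₀, rfl⟩
    · have h1 : ∀ j : Fin n, (Pi.single (0 : Fin (n+1)) 1 : Fin (n+1) → ℕ) j.succ = 0 := by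
        intro j; exact Pi.single_eq_of_ne (Fin.succ_ne_zero j) 1
      simp only [h1, add_zero, Pi.single_eq_same]
      have hR : Commute (A 0) (List.ofFn fun j : Fin n => A j.succ ^ k j.succ).prod := by
        apply Commute.list_prod_right
        intro x hx
        rw [List.mem_ofFn] at hx
        obtain ⟨j, rfl⟩ := hx
        exact (hA 0 j.succ).pow_right _
      rw [pow_succ, mul_assoc, mul_assoc, hR.eq]
    · have h0 : (Pi.single (j₀.succ) 1 : Fin (n+1) → ℕ) (0 : Fin (n+1)) = 0 :=
        Pi.single_eq_of_ne (Fin.succ_ne_zero j₀).symm 1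
      have h2 : ∀ j : Fin n, (Pi.single (j₀.succ) 1 : Fin (n+1) → ℕ) j.succ
          = (Pi.single j₀ 1 : Fin n → ℕ) j := by
        intro j
        simp [Pi.single_apply, Fin.succ_inj]
      simp only [h0, add_zero, h2]
      rw [ih (fun j => A j.succ) (fun i j => hA i.succ j.succ) (fun j => k j.succ) j₀,
        mul_assoc]

/-- multinomial coefficient as a real number -/
noncomputable def stmt17_gam {n : ℕ} (k : Fin n → ℕ) : ℝ :=
  ((∑ i, k i).factorial : ℝ) / ∏ i, ((k i).factorial : ℝ)

/-- level set -/
def stmt17_L (n m : ℕ) : Finset (Fin n → ℕ) :=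
  (Fintype.piFinset fun _ => Finset.range (m+1)).filter fun k => ∑ i, k i = m

lemma stmt17_mem_L {n m : ℕ} {k : Fin n → ℕ} : k ∈ stmt17_L n m ↔ ∑ i, k i = m := by
  simp only [stmt17_L, Finset.mem_filter, Fintype.mem_piFinset, Finset.mem_range,
    Nat.lt_succ_iff]
  constructor
  · rintro ⟨-, h⟩; exact h
  · intro h
    exact ⟨fun i => h ▸ Finset.single_le_sum (f := fun i => k i) (fun _ _ => Nat.zero_le _)
      (Finset.mem_univ i), h⟩

/-- box -/
def stmt17_B (n M : ℕ) : Finset (Fin n → ℕ) :=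
  (Fintype.piFinset fun _ => Finset.range (M+1)).filter fun k => ∑ i, k i ≤ M

lemma stmt17_mem_B {n M : ℕ} {k : Fin n → ℕ} : k ∈ stmt17_B n M ↔ ∑ i, k i ≤ M := by
  simp only [stmt17_B, Finset.mem_filter, Fintype.mem_piFinset, Finset.mem_range,
    Nat.lt_succ_iff]
  constructor
  · rintro ⟨-, h⟩; exact h
  · intro h
    exact ⟨fun i => le_trans (Finset.single_le_sum (f := fun i => k i)
      (fun _ _ => Nat.zero_le _) (Finset.mem_univ i)) h, h⟩

variable {H : Type*} [NormedAddCommGroup H] [InnerProductSpace ℂ H] [CompleteSpace H] {n : ℕ}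

/-- word operator -/
noncomputable def stmt17_W (A : Fin n → (H →L[ℂ] H)) (k : Fin n → ℕ) : H →L[ℂ] H :=
  (List.ofFn fun i => A i ^ k i).prod

/-- level sum -/
noncomputable def stmt17_b (A : Fin n → (H →L[ℂ] H)) (D : H →L[ℂ] H) (m : ℕ) (h : H) : ℝ :=
  ∑ k ∈ stmt17_L n m, stmt17_gam k * ‖D (stmt17_W A k h)‖ ^ 2

/-- iterate quantity -/
noncomputable def stmt17_c (T : Fin n → (H →L[ℂ] H)) (m : ℕ) (h : H) : ℝ :=
  (inner ℂ (((fun X : H →L[ℂ] H => ∑ i, T i ∘L X ∘L adjoint (T i))^[m] 1) h) h : ℂ).re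

lemma stmt17_c_zero (T : Fin n → (H →L[ℂ] H)) (h : H) : stmt17_c T 0 h = ‖h‖ ^ 2 := by
  simp only [stmt17_c, Function.iterate_zero, id_eq, ContinuousLinearMap.one_apply]
  exact inner_self_eq_norm_sq (𝕜 := ℂ) h

lemma stmt17_c_succ (T : Fin n → (H →L[ℂ] H)) (m : ℕ) (h : H) :
    stmt17_c T (m+1) h = ∑ i, stmt17_c T m (adjoint (T i) h) := by
  simp only [stmt17_c, Function.iterate_succ_apply']
  rw [ContinuousLinearMap.sum_apply, sum_inner, Complex.re_sum]
  refine Finset.sum_congr rfl fun i _ => ?_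
  congr 1
  rw [ContinuousLinearMap.comp_apply, ContinuousLinearMap.comp_apply]
  rw [← ContinuousLinearMap.adjoint_inner_right]

lemma stmt17_c_nonneg (T : Fin n → (H →L[ℂ] H)) (m : ℕ) : ∀ h : H, 0 ≤ stmt17_c T m h := by
  induction m with
  | zero => intro h; rw [stmt17_c_zero]; positivity
  | succ m ih =>
    intro h
    rw [stmt17_c_succ]
    exact Finset.sum_nonneg fun i _ => ih _

lemma stmt17_b_succ (A : Fin n → (H →L[ℂ] H)) (hA : ∀ i j, Commute (A i) (A j))
    (D : H →L[ℂ] H) (m : ℕ) (h : H) :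
    stmt17_b A D (m+1) h = ∑ i, stmt17_b A D m (A i h) := by
  classical
  -- coefficient splitting
  have key : ∀ k ∈ stmt17_L n (m+1),
      stmt17_gam k * ‖D (stmt17_W A k h)‖ ^ 2
        = ∑ i, ((m.factorial : ℝ) * (k i) / ∏ j, ((k j).factorial : ℝ))
            * ‖D (stmt17_W A k h)‖ ^ 2 := by
    intro k hk
    rw [← Finset.sum_mul]
    congr 1
    rw [stmt17_mem_L] at hk
    have hsum : ∑ i, ((k i : ℝ)) = ((m+1 : ℕ) : ℝ) := by
      rw [← Nat.cast_sum, hk]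
    simp only [stmt17_gam, hk]
    rw [← Finset.sum_div, ← Finset.mul_sum, hsum]
    rw [Nat.factorial_succ]
    push_cast
    ring
  rw [stmt17_b]
  rw [Finset.sum_congr rfl key, Finset.sum_comm]
  refine Finset.sum_congr rfl fun i _ => ?_
  set e : Fin n → ℕ := Pi.single i 1 with he
  have hei : e i = 1 := Pi.single_eq_same i 1
  have hej : ∀ j, j ≠ i → e j = 0 := fun j hj => Pi.single_eq_of_ne hj 1
  -- drop the terms with k i = 0
  rw [← Finset.sum_filter_of_ne (p := fun k => k i ≠ 0) (fun k _ hne => by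
    intro h0
    apply hne
    rw [h0]
    simp)]
  rw [stmt17_b]
  refine (Finset.sum_nbij' (fun k' => k' + e) (fun k => k - e) ?_ ?_ ?_ ?_ ?_).symm
  · -- maps to
    intro k' hk'
    rw [stmt17_mem_L] at hk'
    rw [Finset.mem_filter, stmt17_mem_L]
    constructor
    · show ∑ j, (k' j + e j) = m + 1
      rw [Finset.sum_add_distrib, hk']
      congr 1
      rw [he, Finset.sum_pi_single']
      simp
    · simp [Pi.add_apply, hei]
  · -- inverse maps to
    intro k hk
    rw [Finset.mem_filter, stmt17_mem_L] at hk
    obtain ⟨hks, hki⟩ := hk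
    rw [stmt17_mem_L]
    have h1 : k i + ∑ j ∈ Finset.univ.erase i, k j = m + 1 := by
      rw [Finset.add_sum_erase _ _ (Finset.mem_univ i), hks]
    have h2 : ∑ j ∈ Finset.univ.erase i, (k j - e j) = ∑ j ∈ Finset.univ.erase i, k j :=
      Finset.sum_congr rfl fun j hj => by rw [hej j (Finset.mem_erase.1 hj).1, Nat.sub_zero]
    show ∑ j, (k j - e j) = m
    rw [← Finset.add_sum_erase _ (fun j => k j - e j) (Finset.mem_univ i), h2, hei]
    omega
  · -- left inverse
    intro k' _
    funext j
    by_cases hji : j = i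
    · subst hji; simp [Pi.add_apply, Pi.sub_apply, hei]
    · simp [Pi.add_apply, Pi.sub_apply, hej j hji]
  · -- right inverse
    intro k hk
    rw [Finset.mem_filter, stmt17_mem_L] at hk
    funext j
    by_cases hji : j = i
    · subst hji
      simp only [Pi.add_apply, Pi.sub_apply, hei]
      omega
    · simp [Pi.add_apply, Pi.sub_apply, hej j hji]
  · -- term equality
    intro k' hk'
    rw [stmt17_mem_L] at hk'
    have hW : stmt17_W A (k' + e) h = stmt17_W A k' (A i h) := by
      have := stmt17_W_add_single A hA k' i
      rw [stmt17_W, stmt17_W]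
      simp only [Pi.add_apply, he]
      rw [this]
      rfl
    rw [hW]
    congr 1
    have hprodpos : (0:ℝ) < ∏ j, ((k' j).factorial : ℝ) :=
      Finset.prod_pos fun j _ => by exact_mod_cast (k' j).factorial_pos
    have hprod : ∏ j, (((k' + e) j).factorial : ℝ)
        = ((k' i : ℝ) + 1) * ∏ j, ((k' j).factorial : ℝ) := by
      rw [← Finset.mul_prod_erase _ (fun j => (((k' + e) j).factorial : ℝ)) (Finset.mem_univ i),
        ← Finset.mul_prod_erase _ (fun j => ((k' j).factorial : ℝ)) (Finset.mem_univ i)]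
      have h2 : ∏ j ∈ Finset.univ.erase i, (((k' + e) j).factorial : ℝ)
          = ∏ j ∈ Finset.univ.erase i, ((k' j).factorial : ℝ) :=
        Finset.prod_congr rfl fun j hj => by
          rw [Pi.add_apply, hej j (Finset.mem_erase.1 hj).1, add_zero]
      rw [h2, Pi.add_apply, hei, Nat.factorial_succ]
      push_cast
      ring
    rw [stmt17_gam, hk', hprod]
    have hki1 : ((k' i : ℝ) + 1) ≠ 0 := by positivity
    have h3 : ((k' + e) i : ℝ) = (k' i : ℝ) + 1 := by
      simp [Pi.add_apply, hei]
    rw [h3]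
    field_simp

lemma stmt17_b_eq (T : Fin n → H →L[ℂ] H) (hcomm : ∀ i j, T i ∘L T j = T j ∘L T i)
    (D : H →L[ℂ] H) (hDsa : IsSelfAdjoint D)
    (hD : D ∘L D = (1 : H →L[ℂ] H) - ∑ i, T i ∘L adjoint (T i)) (m : ℕ) :
    ∀ h : H, stmt17_b (fun i => adjoint (T i)) D m h
      = stmt17_c T m h - stmt17_c T (m+1) h := by
  have hDadj : adjoint D = D := ContinuousLinearMap.isSelfAdjoint_iff'.mp hDsa
  induction m with
  | zero =>
    intro h
    have hL0 : stmt17_L n 0 = {fun _ => 0} := by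
      ext k
      rw [stmt17_mem_L, Finset.mem_singleton]
      simp [Finset.sum_eq_zero_iff, funext_iff]
    have hb0 : stmt17_b (fun i => adjoint (T i)) D 0 h = ‖D h‖ ^ 2 := by
      rw [stmt17_b, hL0, Finset.sum_singleton]
      have hg : stmt17_gam (fun _ : Fin n => 0) = 1 := by simp [stmt17_gam]
      have hW : stmt17_W (fun i => adjoint (T i)) (fun _ : Fin n => 0) = 1 := by
        rw [stmt17_W]
        simp [pow_zero, List.ofFn_const]
      rw [hg, hW, one_mul, ContinuousLinearMap.one_apply]
    have hc1 : stmt17_c T 1 h = (inner ℂ ((∑ i, T i ∘L adjoint (T i)) h) h : ℂ).re := by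
      simp [stmt17_c]
    have hkey : (inner ℂ (D (D h)) h : ℂ) = inner ℂ (D h) (D h) := by
      have := ContinuousLinearMap.adjoint_inner_right (𝕜 := ℂ) D (D h) h
      rw [hDadj] at this
      exact this.symm
    have h2 : D (D h) = ((1 : H →L[ℂ] H) - ∑ i, T i ∘L adjoint (T i)) h := by
      rw [← hD]; rfl
    rw [hb0, stmt17_c_zero, hc1]
    calc ‖D h‖ ^ 2 = (inner ℂ (D h) (D h) : ℂ).re := (inner_self_eq_norm_sq (𝕜 := ℂ) _).symm
      _ = (inner ℂ (D (D h)) h : ℂ).re := by rw [hkey]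
      _ = (inner ℂ (((1 : H →L[ℂ] H) - ∑ i, T i ∘L adjoint (T i)) h) h : ℂ).re := by rw [h2]
      _ = ‖h‖ ^ 2 - (inner ℂ ((∑ i, T i ∘L adjoint (T i)) h) h : ℂ).re := by
          rw [ContinuousLinearMap.sub_apply, inner_sub_left, Complex.sub_re,
            ContinuousLinearMap.one_apply]
          congr 1
          exact inner_self_eq_norm_sq (𝕜 := ℂ) h
  | succ m ih =>
    intro h
    have hA : ∀ i j, Commute (adjoint (T i)) (adjoint (T j)) := by
      intro i j
      show adjoint (T i) * adjoint (T j) = adjoint (T j) * adjoint (T i)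
      rw [ContinuousLinearMap.mul_def, ContinuousLinearMap.mul_def,
        ← ContinuousLinearMap.adjoint_comp, ← ContinuousLinearMap.adjoint_comp, hcomm]
    rw [stmt17_b_succ _ hA]
    rw [Finset.sum_congr rfl fun i _ => ih ((adjoint (T i)) h)]
    rw [Finset.sum_sub_distrib, ← stmt17_c_succ, ← stmt17_c_succ]

end AuxForStmt17

/-- For a pure commuting row contraction `T` with defect operator `D`, the map
`Π* h = ∑_k γ_k (D T^{*k} h) z^k` into the `𝒟`-valued Drury–Arveson space is an isometry:
`∑_{k ∈ ℕⁿ} γ_k ‖D T^{*k} h‖² = ‖h‖²` for every `h ∈ H`. -/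
theorem stmt17 {H : Type*} [NormedAddCommGroup H] [InnerProductSpace ℂ H] [CompleteSpace H]
    {n : ℕ} (T : Fin n → H →L[ℂ] H)
    (hcomm : ∀ i j, T i ∘L T j = T j ∘L T i)
    (hrow : ((1 : H →L[ℂ] H) - ∑ i, T i ∘L adjoint (T i)).IsPositive)
    (hpure : ∀ h : H,
      Filter.Tendsto (fun m => ((fun X : H →L[ℂ] H => ∑ i, T i ∘L X ∘L adjoint (T i))^[m] 1) h)
        Filter.atTop (nhds 0))
    (D : H →L[ℂ] H) (hDpos : D.IsPositive)
    (hD : D ∘L D = (1 : H →L[ℂ] H) - ∑ i, T i ∘L adjoint (T i))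
    (h : H) :
    HasSum
      (fun k : Fin n → ℕ =>
        (((∑ i, k i).factorial : ℝ) / ∏ i, ((k i).factorial : ℝ)) *
          ‖D ((List.ofFn fun i => (adjoint (T i)) ^ (k i)).prod h)‖ ^ 2)
      (‖h‖ ^ 2) := by
  classical
  have hmain : HasSum (fun k : Fin n → ℕ =>
      stmt17_gam k * ‖D (stmt17_W (fun i => adjoint (T i)) k h)‖ ^ 2) (‖h‖ ^ 2) := by
    set f : (Fin n → ℕ) → ℝ :=
      fun k => stmt17_gam k * ‖D (stmt17_W (fun i => adjoint (T i)) k h)‖ ^ 2 with hf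
    have hfnn : ∀ k, 0 ≤ f k := by
      intro k
      apply mul_nonneg _ (by positivity)
      rw [stmt17_gam]
      positivity
    have hbox : ∀ M, ∑ k ∈ stmt17_B n M, f k = ‖h‖ ^ 2 - stmt17_c T (M+1) h := by
      intro M
      have h1 : ∑ k ∈ stmt17_B n M, f k
          = ∑ m ∈ Finset.range (M+1), stmt17_b (fun i => adjoint (T i)) D m h := by
        have hmaps : ∀ k ∈ stmt17_B n M, (∑ i, k i) ∈ Finset.range (M+1) := by
          intro k hk
          rw [Finset.mem_range]
          have := stmt17_mem_B.1 hk
          omega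
        rw [← Finset.sum_fiberwise_of_maps_to hmaps f]
        refine Finset.sum_congr rfl fun m hm => ?_
        have hmM := Finset.mem_range.1 hm
        have hfil : (stmt17_B n M).filter (fun k => ∑ i, k i = m) = stmt17_L n m := by
          ext k
          rw [Finset.mem_filter, stmt17_mem_B, stmt17_mem_L]
          constructor
          · rintro ⟨-, hh⟩; exact hh
          · intro hh; exact ⟨by omega, hh⟩
        rw [hfil]
        rfl
      rw [h1]
      have h2 : ∀ m ∈ Finset.range (M+1), stmt17_b (fun i => adjoint (T i)) D m h
          = stmt17_c T m h - stmt17_c T (m+1) h :=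
        fun m _ => stmt17_b_eq T hcomm D hDpos.isSelfAdjoint hD m h
      rw [Finset.sum_congr rfl h2, Finset.sum_range_sub' (fun m => stmt17_c T m h),
        stmt17_c_zero]
    have hct : Filter.Tendsto (fun M => stmt17_c T (M+1) h) Filter.atTop (nhds 0) := by
      have hcont : Continuous fun x : H => (inner ℂ x h : ℂ).re :=
        Complex.continuous_re.comp (Continuous.inner continuous_id continuous_const)
      have h1 : Filter.Tendsto (fun m => stmt17_c T m h) Filter.atTop (nhds 0) := by
        have := (hcont.tendsto 0).comp (hpure h)
        simpa [Function.comp_def, stmt17_c] using this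
      exact h1.comp (Filter.tendsto_add_atTop_nat 1)
    apply hasSum_of_isLUB_of_nonneg (‖h‖ ^ 2 : ℝ) hfnn
    constructor
    · rintro x ⟨s, rfl⟩
      have hsub : s ⊆ stmt17_B n (s.sup fun k => ∑ i, k i) :=
        fun k hk => stmt17_mem_B.2 (Finset.le_sup (f := fun k => ∑ i, k i) hk)
      calc ∑ k ∈ s, f k ≤ ∑ k ∈ stmt17_B n (s.sup fun k => ∑ i, k i), f k :=
            Finset.sum_le_sum_of_subset_of_nonneg hsub fun k _ _ => hfnn k
        _ = ‖h‖ ^ 2 - stmt17_c T ((s.sup fun k => ∑ i, k i) + 1) h := hbox _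
        _ ≤ ‖h‖ ^ 2 := by linarith [stmt17_c_nonneg T ((s.sup fun k => ∑ i, k i) + 1) h]
    · intro y hy
      by_contra hlt
      push_neg at hlt
      obtain ⟨M, hM⟩ := (hct.eventually_lt_const (by linarith : (0:ℝ) < ‖h‖ ^ 2 - y)).exists
      have hyb : ∑ k ∈ stmt17_B n M, f k ≤ y := hy (Set.mem_range_self (stmt17_B n M))
      have hb := hbox M
      linarith
  exact hmain
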